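/- Let q : M → (1,∞) be a bounded measurable exponent and suppose u ∈ L^{q(·)}(M), v ∈ L^{q'(·)}(M) with ‖u‖_{q(·)} ≠ 0 and ‖v‖_{q'(·)} ≠ 0, where q' is the pointwise conjugate exponent. Then ∫_M (|u(x) v(x)|)/(‖u‖_{q(·)} ‖v‖_{q'(·)}) dμ(x) ≤ 1 + 1/q⁻ − 1/q⁺, where q⁻ = ess inf q, q⁺ = ess sup q. -/

import Mathlib

open MeasureTheory Filter Topology Real

/-- The modular of the variable exponent Lebesgue space. -/
noncomputable def vmodular {M : Type*} [MeasurableSpace M] (μ : Measure M) (q u : M → ℝ) : ℝ :=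
  ∫ x, |u x| ^ (q x) ∂μ

/-- The Luxemburg norm of the variable exponent Lebesgue space. -/
noncomputable def luxNorm {M : Type*} [MeasurableSpace M] (μ : Measure M) (q u : M → ℝ) : ℝ :=
  sInf {c : ℝ | 0 < c ∧ vmodular μ q (fun x => u x / c) ≤ 1}

/-- Membership in the variable exponent Lebesgue space `L^{q(·)}`. -/
def MemLq {M : Type*} [MeasurableSpace M] (μ : Measure M) (q u : M → ℝ) : Prop :=
  AEMeasurable u μ ∧ Integrable (fun x => |u x| ^ (q x)) μ

lemma lemA {M : Type*} [MeasurableSpace M] {μ : Measure M} {q u : M → ℝ}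
    (hum : AEMeasurable u μ) (hq : AEMeasurable q μ)
    (hint : Integrable (fun x => |u x| ^ q x) μ)
    {a b : ℝ} (hab : ∀ᵐ x ∂μ, a ≤ q x ∧ q x ≤ b)
    {c : ℝ} (hc : 0 < c) :
    Integrable (fun x => |u x / c| ^ q x) μ := by
  have hmeas : AEMeasurable (fun x => |u x / c| ^ q x) μ :=
    ((continuous_abs.measurable.comp_aemeasurable' (hum.div_const c)).pow hq)
  have hKpos : 0 < min (c ^ a) (c ^ b) :=
    lt_min (Real.rpow_pos_of_pos hc a) (Real.rpow_pos_of_pos hc b)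
  refine Integrable.mono' (hint.const_mul (min (c ^ a) (c ^ b))⁻¹)
    hmeas.aestronglyMeasurable ?_
  filter_upwards [hab] with x hx
  obtain ⟨ha, hb'⟩ := hx
  have h0 : (0:ℝ) ≤ |u x / c| ^ q x := Real.rpow_nonneg (abs_nonneg _) _
  rw [Real.norm_eq_abs, abs_of_nonneg h0]
  have heq : |u x / c| ^ q x = |u x| ^ q x / c ^ q x := by
    rw [abs_div, abs_of_pos hc, Real.div_rpow (abs_nonneg _) hc.le]
  have hmin : min (c ^ a) (c ^ b) ≤ c ^ q x := by
    rcases le_total 1 c with h1c | h1c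
    · exact le_trans (min_le_left _ _) (Real.rpow_le_rpow_of_exponent_le h1c ha)
    · exact le_trans (min_le_right _ _) (Real.rpow_le_rpow_of_exponent_ge hc h1c hb')
  rw [heq]
  calc |u x| ^ q x / c ^ q x ≤ |u x| ^ q x / min (c ^ a) (c ^ b) := by
        apply div_le_div_of_nonneg_left (Real.rpow_nonneg (abs_nonneg _) _) hKpos hmin
    _ = (min (c ^ a) (c ^ b))⁻¹ * |u x| ^ q x := by rw [div_eq_mul_inv, mul_comm]

lemma lemB {M : Type*} [MeasurableSpace M] {μ : Measure M} {q u : M → ℝ}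
    (hum : AEMeasurable u μ) (hq : AEMeasurable q μ)
    (hint : Integrable (fun x => |u x| ^ q x) μ)
    {a b : ℝ} (h0a : 0 < a) (hab : ∀ᵐ x ∂μ, a ≤ q x ∧ q x ≤ b)
    (hn : luxNorm μ q u ≠ 0) :
    0 < luxNorm μ q u ∧
      Integrable (fun x => |u x / luxNorm μ q u| ^ q x) μ ∧
      (∫ x, |u x / luxNorm μ q u| ^ q x ∂μ) ≤ 1 := by
  set S : Set ℝ := {c : ℝ | 0 < c ∧ vmodular μ q (fun x => u x / c) ≤ 1} with hS
  have hLdef : luxNorm μ q u = sInf S := rfl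
  have hSne : S.Nonempty := by
    by_contra h
    rw [Set.not_nonempty_iff_eq_empty] at h
    exact hn (by rw [hLdef, h, Real.sInf_empty])
  have hL0 : 0 ≤ luxNorm μ q u := by
    rw [hLdef]; exact le_csInf hSne fun c hc => hc.1.le
  have hLpos : 0 < luxNorm μ q u := lt_of_le_of_ne hL0 (Ne.symm hn)
  set L := luxNorm μ q u with hLL
  have hintL : Integrable (fun x => |u x / L| ^ q x) μ := lemA hum hq hint hab hLpos
  refine ⟨hLpos, hintL, ?_⟩
  -- every c > L has modular ≤ 1
  have claim : ∀ c : ℝ, L < c → (∫ x, |u x / c| ^ q x ∂μ) ≤ 1 := by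
    intro c hc
    have hcpos : 0 < c := hLpos.trans hc
    obtain ⟨s, hsS, hsc⟩ := exists_lt_of_csInf_lt hSne (by rw [← hLdef]; exact hc)
    have hspos : 0 < s := hsS.1
    have hmod : (∫ x, |u x / s| ^ q x ∂μ) ≤ 1 := hsS.2
    refine le_trans ?_ hmod
    apply integral_mono_ae (lemA hum hq hint hab hcpos) (lemA hum hq hint hab hspos)
    filter_upwards [hab] with x hx
    have h0q : 0 ≤ q x := h0a.le.trans hx.1
    have hbase : |u x / c| ≤ |u x / s| := by
      rw [abs_div, abs_div, abs_of_pos hcpos, abs_of_pos hspos]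
      exact div_le_div_of_nonneg_left (abs_nonneg _) hspos hsc.le
    exact Real.rpow_le_rpow (abs_nonneg _) hbase h0q
  -- dominated convergence along c_n = L + 1/(n+1)
  set c : ℕ → ℝ := fun n => L + 1 / (n + 1) with hcdef
  have hcpos : ∀ n, 0 < c n := fun n => by positivity
  have hcgt : ∀ n, L < c n := fun n => by
    have : (0:ℝ) < 1 / (n + 1) := by positivity
    simpa [hcdef] using this
  have hctend : Tendsto c atTop (𝓝 L) := by
    have h0 : Tendsto (fun n : ℕ => 1 / ((n : ℝ) + 1)) atTop (𝓝 0) :=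
      tendsto_one_div_add_atTop_nhds_zero_nat
    have h1' : Tendsto (fun n : ℕ => L + 1 / ((n : ℝ) + 1)) atTop (𝓝 (L + 0)) :=
      (tendsto_const_nhds : Tendsto (fun _ : ℕ => L) atTop (𝓝 L)).add h0
    rw [hcdef]
    simpa using h1'
  have htend : Tendsto (fun n => ∫ x, |u x / c n| ^ q x ∂μ) atTop
      (𝓝 (∫ x, |u x / L| ^ q x ∂μ)) := by
    apply tendsto_integral_of_dominated_convergence (fun x => |u x / L| ^ q x)
      (fun n => ((continuous_abs.measurable.comp_aemeasurable' (hum.div_const (c n))).pow hq).aestronglyMeasurable)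
      hintL
    · intro n
      filter_upwards [hab] with x hx
      have h0q : 0 ≤ q x := h0a.le.trans hx.1
      have h0 : (0:ℝ) ≤ |u x / c n| ^ q x := Real.rpow_nonneg (abs_nonneg _) _
      rw [Real.norm_eq_abs, abs_of_nonneg h0]
      have hbase : |u x / c n| ≤ |u x / L| := by
        rw [abs_div, abs_div, abs_of_pos (hcpos n), abs_of_pos hLpos]
        exact div_le_div_of_nonneg_left (abs_nonneg _) hLpos (hcgt n).le
      exact Real.rpow_le_rpow (abs_nonneg _) hbase h0q
    · filter_upwards [hab] with x hx
      have h0q : 0 < q x := h0a.trans_le hx.1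
      have hbase : Tendsto (fun n => u x / c n) atTop (𝓝 (u x / L)) :=
        tendsto_const_nhds.div hctend hLpos.ne'
      have habs : Tendsto (fun n => |u x / c n|) atTop (𝓝 (|u x / L|)) :=
        hbase.abs
      have hcont : ContinuousAt (fun t : ℝ => t ^ q x) (|u x / L|) :=
        Real.continuousAt_rpow_const _ _ (Or.inr h0q.le)
      exact hcont.tendsto.comp habs
  exact le_of_tendsto htend (Filter.Eventually.of_forall fun n => claim (c n) (hcgt n))

/-- Intermediate inequality in the proof of the variable exponent Hölder inequality:
for normalized `u` and `v`, `∫ |u v|/(‖u‖‖v‖) ≤ 1 + 1/q⁻ − 1/q⁺`. -/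
theorem normalized_holder_estimate
    {M : Type*} [MeasurableSpace M] (μ : Measure M)
    (q : M → ℝ) (hq : Measurable q)
    (qm qp : ℝ) (hqm : qm = essInf q μ) (hqp : qp = essSup q μ)
    (h1 : 1 < qm) (h2 : qm ≤ qp)
    (q' : M → ℝ) (hq' : ∀ x, q' x = q x / (q x - 1))
    (u v : M → ℝ) (hu : MemLq μ q u) (hv : MemLq μ q' v)
    (hun : luxNorm μ q u ≠ 0) (hvn : luxNorm μ q' v ≠ 0) :
    ∫ x, |u x * v x| / (luxNorm μ q u * luxNorm μ q' v) ∂μ ≤ 1 + 1 / qm - 1 / qp := by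
  have h1p : 1 < qp := h1.trans_le h2
  -- q is essentially bounded above and below
  have hbdd_above : IsBoundedUnder (· ≤ ·) (ae μ) q := by
    by_contra h
    have hempty : {a : ℝ | ∀ᶠ x in ae μ, q x ≤ a} = ∅ := by
      ext a
      simp only [Set.mem_setOf_eq, Set.mem_empty_iff_false, iff_false]
      intro ha
      exact h ⟨a, by simpa [Filter.eventually_map] using ha⟩
    have : essSup q μ = 0 := by
      rw [essSup, Filter.limsup_eq, hempty, Real.sInf_empty]
    rw [hqp] at h1p; rw [this] at h1p; linarith
  have hbdd_below : IsBoundedUnder (· ≥ ·) (ae μ) q := by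
    by_contra h
    have hempty : {a : ℝ | ∀ᶠ x in ae μ, a ≤ q x} = ∅ := by
      ext a
      simp only [Set.mem_setOf_eq, Set.mem_empty_iff_false, iff_false]
      intro ha
      exact h ⟨a, by simpa [Filter.eventually_map] using ha⟩
    have : essInf q μ = 0 := by
      rw [essInf, Filter.liminf_eq, hempty, Real.sSup_empty]
    rw [hqm] at h1; rw [this] at h1; linarith
  have hq_ub : ∀ᵐ x ∂μ, q x ≤ qp := hqp ▸ ae_le_essSup hbdd_above
  have hq_lb : ∀ᵐ x ∂μ, qm ≤ q x := hqm ▸ ae_essInf_le hbdd_below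
  have habq : ∀ᵐ x ∂μ, qm ≤ q x ∧ q x ≤ qp := hq_lb.and hq_ub
  have hq'_meas : Measurable q' := by
    have : q' = fun x => q x / (q x - 1) := funext hq'
    rw [this]; exact hq.div (hq.sub measurable_const)
  -- conjugate bounds
  set a' : ℝ := qp / (qp - 1) with ha'
  set b' : ℝ := qm / (qm - 1) with hb'
  have hmono : ∀ s t : ℝ, 1 < s → s ≤ t → t / (t - 1) ≤ s / (s - 1) := by
    intro s t hs hst
    rw [div_le_div_iff₀ (by linarith) (by linarith)]
    nlinarith
  have ha'pos : 0 < a' := div_pos (by linarith) (by linarith)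
  have habq' : ∀ᵐ x ∂μ, a' ≤ q' x ∧ q' x ≤ b' := by
    filter_upwards [habq] with x hx
    have h1x : 1 < q x := h1.trans_le hx.1
    rw [hq']
    exact ⟨hmono (q x) qp h1x hx.2, hmono qm (q x) h1 hx.1⟩
  -- unit ball properties
  obtain ⟨hLu, hintu, hmodu⟩ := lemB hu.1 hq.aemeasurable hu.2 (by linarith : (0:ℝ) < qm) habq hun
  obtain ⟨hLv, hintv, hmodv⟩ := lemB hv.1 hq'_meas.aemeasurable hv.2 ha'pos habq' hvn
  set Lu := luxNorm μ q u
  set Lv := luxNorm μ q' v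
  -- pointwise Young estimate
  have key : ∀ᵐ x ∂μ, |u x * v x| / (Lu * Lv) ≤
      (1 / qm) * |u x / Lu| ^ q x + (1 - 1 / qp) * |v x / Lv| ^ q' x := by
    filter_upwards [habq] with x hx
    have h1x : 1 < q x := h1.trans_le hx.1
    have h0x : (0:ℝ) < q x := by linarith
    have hconj : (q x).HolderConjugate (q' x) := by
      refine Real.holderConjugate_iff.mpr ⟨h1x, ?_⟩
      rw [hq']
      have h0 : q x ≠ 0 := by linarith
      have h0' : q x - 1 ≠ 0 := by linarith
      field_simp
      ring
    have hy := Real.young_inequality_of_nonneg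
      (div_nonneg (abs_nonneg (u x)) hLu.le) (div_nonneg (abs_nonneg (v x)) hLv.le) hconj
    have habsu : |u x / Lu| = |u x| / Lu := by rw [abs_div, abs_of_pos hLu]
    have habsv : |v x / Lv| = |v x| / Lv := by rw [abs_div, abs_of_pos hLv]
    have hq'inv : (q' x)⁻¹ = 1 - (q x)⁻¹ := by
      have := hconj.inv_add_inv_eq_one; linarith
    calc |u x * v x| / (Lu * Lv) = (|u x| / Lu) * (|v x| / Lv) := by
          rw [abs_mul, div_mul_div_comm]
      _ ≤ (|u x| / Lu) ^ q x / q x + (|v x| / Lv) ^ q' x / q' x := hy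
      _ ≤ (1 / qm) * |u x / Lu| ^ q x + (1 - 1 / qp) * |v x / Lv| ^ q' x := by
          rw [habsu, habsv]
          apply add_le_add
          · rw [div_eq_mul_inv, mul_comm]
            apply mul_le_mul_of_nonneg_right _ (Real.rpow_nonneg (div_nonneg (abs_nonneg _) hLu.le) _)
            rw [one_div]
            exact inv_anti₀ (by linarith) hx.1
          · rw [div_eq_mul_inv, mul_comm]
            apply mul_le_mul_of_nonneg_right _ (Real.rpow_nonneg (div_nonneg (abs_nonneg _) hLv.le) _)
            rw [hq'inv]
            have : (qp)⁻¹ ≤ (q x)⁻¹ := inv_anti₀ h0x hx.2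
            rw [one_div]; linarith
  -- integrability
  have hrhs : Integrable (fun x => (1 / qm) * |u x / Lu| ^ q x
      + (1 - 1 / qp) * |v x / Lv| ^ q' x) μ :=
    (hintu.const_mul _).add (hintv.const_mul _)
  have hlhs : Integrable (fun x => |u x * v x| / (Lu * Lv)) μ := by
    refine Integrable.mono' hrhs
      ((continuous_abs.measurable.comp_aemeasurable' (hu.1.mul hv.1)).div_const _).aestronglyMeasurable ?_
    filter_upwards [key] with x hx
    rw [Real.norm_eq_abs, abs_of_nonneg (div_nonneg (abs_nonneg _) (mul_nonneg hLu.le hLv.le))]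
    exact hx
  calc ∫ x, |u x * v x| / (Lu * Lv) ∂μ
      ≤ ∫ x, (1 / qm) * |u x / Lu| ^ q x + (1 - 1 / qp) * |v x / Lv| ^ q' x ∂μ :=
        integral_mono_ae hlhs hrhs key
    _ = (1 / qm) * ∫ x, |u x / Lu| ^ q x ∂μ
        + (1 - 1 / qp) * ∫ x, |v x / Lv| ^ q' x ∂μ := by
        rw [integral_add (hintu.const_mul _) (hintv.const_mul _),
          integral_const_mul, integral_const_mul]
    _ ≤ (1 / qm) * 1 + (1 - 1 / qp) * 1 := by
        apply add_le_add
        · exact mul_le_mul_of_nonneg_left hmodu (by positivity)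
        · apply mul_le_mul_of_nonneg_left hmodv
          have : 1 / qp ≤ 1 := by
            rw [div_le_one (by linarith)]; linarith
          linarith
    _ = 1 + 1 / qm - 1 / qp := by ring
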